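/- For any two distinct sequences x, y of the same length over a q-ary alphabet, the intersection of their single-insertion balls contains at most 2 elements: |I_1(x) ∩ I_1(y)| ≤ 2. -/

import Mathlib

/-- The t-insertion ball: length-(|x|+t) supersequences of x. -/
def iBall {α : Type*} (t : ℕ) (x : List α) : Set (List α) :=
  {z | x.Sublist z ∧ z.length = x.length + t}

lemma key_two_supseq {α : Type*} : ∀ (x y : List α), x.length = y.length → x ≠ y →
    ∃ w₁ w₂ : List α, ∀ z, x.Sublist z → y.Sublist z → z.length = x.length + 1 →
      z = w₁ ∨ z = w₂ := by
  intro x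
  induction x with
  | nil =>
    intro y hlen hne
    exact absurd (List.eq_nil_of_length_eq_zero hlen.symm).symm hne
  | cons a x' ih =>
    intro y hlen hne
    match y with
    | [] => simp at hlen
    | c :: y' =>
      by_cases hac : a = c
      · subst hac
        have hx'y' : x' ≠ y' := by intro h; exact hne (by rw [h])
        obtain ⟨w₁, w₂, hw⟩ := ih y' (by simpa using hlen) hx'y'
        refine ⟨a :: w₁, a :: w₂, ?_⟩
        intro z h1 h2 hz
        match z with
        | [] => simp at hz
        | b :: z' =>
          by_cases hba : b = a
          · subst hba
            have h1' : x'.Sublist z' := List.cons_sublist_cons.mp h1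
            have h2' : y'.Sublist z' := List.cons_sublist_cons.mp h2
            have hz' : z'.length = x'.length + 1 := by simpa using hz
            rcases hw z' h1' h2' hz' with h | h
            · left; rw [h]
            · right; rw [h]
          · cases h1 with
            | cons _ h1' =>
              cases h2 with
              | cons _ h2' =>
                have hzx : z'.length = x'.length + 1 := by simpa using hz
                have e1 : a :: x' = z' := h1'.eq_of_length (by simp [hzx])
                have e2 : a :: y' = z' := h2'.eq_of_length (by
                  simp only [List.length_cons] at hlen ⊢; omega)
                exact absurd (e1.trans e2.symm) hne
              | cons_cons _ _ => exact absurd rfl hba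
            | cons_cons _ _ => exact absurd rfl hba
      · refine ⟨a :: (c :: y'), c :: (a :: x'), ?_⟩
        intro z h1 h2 hz
        match z with
        | [] => simp at hz
        | b :: z' =>
          have hzx : z'.length = x'.length + 1 := by simpa using hz
          cases h1 with
          | cons _ h1' =>
            have e1 : a :: x' = z' := h1'.eq_of_length (by simp [hzx])
            cases h2 with
            | cons _ h2' =>
              have e2 : c :: y' = z' := h2'.eq_of_length (by
                simp only [List.length_cons] at hlen ⊢; omega)
              exact absurd (e1.trans e2.symm) hne
            | cons_cons _ h2' =>
              right; rw [← e1]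
          | cons_cons _ h1' =>
            cases h2 with
            | cons _ h2' =>
              have e2 : c :: y' = z' := h2'.eq_of_length (by
                simp only [List.length_cons] at hlen ⊢; omega)
              left; rw [← e2]
            | cons_cons _ _ => exact absurd rfl hac

theorem stmt_8 (q n : ℕ) (x y : List (Fin q))
    (hx : x.length = n) (hy : y.length = n) (hxy : x ≠ y) :
    (iBall 1 x ∩ iBall 1 y).ncard ≤ 2 := by
  obtain ⟨w₁, w₂, hw⟩ := key_two_supseq x y (by rw [hx, hy]) hxy
  have hsub : iBall 1 x ∩ iBall 1 y ⊆ {w₁, w₂} := by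
    rintro z ⟨⟨h1, hl1⟩, ⟨h2, hl2⟩⟩
    rcases hw z h1 h2 hl1 with h | h <;> simp [h]
  calc (iBall 1 x ∩ iBall 1 y).ncard
      ≤ ({w₁, w₂} : Set (List (Fin q))).ncard :=
        Set.ncard_le_ncard hsub ((Set.finite_singleton w₂).insert w₁)
    _ ≤ 2 := by
        refine le_trans (Set.ncard_insert_le _ _) ?_
        simp [Set.ncard_singleton]
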